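/- Let P, F ∈ ℝⁿˣⁿ with P symmetric positive definite, and let ν > 0, ε > 0, μ ≥ 0. Suppose the block matrix [[PF + FᵀP + (νμ² + 2ε)I, P], [P, −νI]] is negative semidefinite. Then for every matrix Δ ∈ ℝⁿˣⁿ with ‖Δ‖ ≤ μ (operator norm) and every s ∈ ℝⁿ: sᵀ(P(F + Δ) + (F + Δ)ᵀP)s ≤ −2ε‖s‖². -/

import Mathlib

open Matrix

theorem stmt_8 {n : ℕ} (P F : Matrix (Fin n) (Fin n) ℝ) (hP : P.PosDef)
    (ν ε μ : ℝ) (hν : 0 < ν) (hε : 0 < ε) (hμ : 0 ≤ μ)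
    (hLMI : (-(Matrix.fromBlocks
        (P * F + Fᵀ * P + (ν * μ ^ 2 + 2 * ε) • (1 : Matrix (Fin n) (Fin n) ℝ))
        P P (-(ν • (1 : Matrix (Fin n) (Fin n) ℝ))))).PosSemidef)
    (Δ : Matrix (Fin n) (Fin n) ℝ)
    -- `‖Δ‖ ≤ μ` in the Euclidean operator norm
    (hΔ : ∀ x : Fin n → ℝ, (Δ.mulVec x) ⬝ᵥ (Δ.mulVec x) ≤ μ ^ 2 * (x ⬝ᵥ x))
    (s : Fin n → ℝ) :
    s ⬝ᵥ ((P * (F + Δ) + (F + Δ)ᵀ * P).mulVec s) ≤ -2 * ε * (s ⬝ᵥ s) := by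
  set y := Δ.mulVec s with hy
  have h0 := hLMI.dotProduct_mulVec_nonneg (Sum.elim s y)
  rw [neg_mulVec, dotProduct_neg, fromBlocks_mulVec] at h0
  simp only [Sum.elim_comp_inl, Sum.elim_comp_inr, star_trivial] at h0
  rw [sumElim_dotProduct_sumElim] at h0
  have hPt : Pᵀ = P := by
    have := hP.1.eq; simpa using this
  simp only [mulVec_add, add_mulVec, dotProduct_add, neg_mulVec, smul_mulVec,
    one_mulVec, dotProduct_neg, dotProduct_smul, smul_eq_mul, Matrix.mul_add, Matrix.add_mul,
    transpose_add, ← mulVec_mulVec] at h0 ⊢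
  have hsym : s ⬝ᵥ P.mulVec y = y ⬝ᵥ P.mulVec s := by
    conv_lhs => rw [← hPt, dotProduct_mulVec, vecMul_transpose]
    exact dotProduct_comm _ _
  have hΔs : s ⬝ᵥ Δᵀ.mulVec (P.mulVec s) = y ⬝ᵥ P.mulVec s := by
    rw [dotProduct_mulVec, vecMul_transpose, hy]
  have hmu := hΔ s
  rw [← hy] at hmu
  nlinarith [h0, hmu, hsym, hΔs, hν.le]
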